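/- Let 1 ≤ k ≤ N and assume the step ratios satisfy 0 < r_i < (3+√17)/2 for 2 ≤ i ≤ N. Let Φ : [0, t_N] → ℝ be three times continuously differentiable, define the local consistency error ξ^j := D_2Φ(t_j) − Φ'(t_j), where D_2Φ(t_j) := Σ_{m=1}^{j} b_{j−m}^{(j)} (Φ(t_m) − Φ(t_{m−1})), and define the convolutional consistency error Ξ^k := Σ_{j=1}^{k} θ_{k−j}^{(k)} ξ^j. Then |Ξ^k| ≤ θ_{k−1}^{(k)} ∫_0^{t_1} |Φ''(t)| dt + 3 Σ_{j=1}^{k} θ_{k−j}^{(k)} τ_j ∫_{t_{j−1}}^{t_j} |Φ'''(t)| dt. -/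

import Mathlib

open Finset intervalIntegral

/-- BDF2 kernels `b_j^{(n)}` (assuming `r 1 = 0`, so the `n = 1` case
`b_0^{(1)} = 1/τ_1` is subsumed by the general formula). -/
noncomputable def bk (τ r : ℕ → ℝ) (n j : ℕ) : ℝ :=
  if j = 0 then (1 + 2 * r n) / (τ n * (1 + r n))
  else if j = 1 then -(r n) ^ 2 / (τ n * (1 + r n))
  else 0

/-- DOC kernels: `th τ r n m = θ_m^{(n)}`, i.e. `θ_{n-k}^{(n)}` with `m = n - k`. -/
noncomputable def th (τ r : ℕ → ℝ) (n : ℕ) : ℕ → ℝ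
  | 0 => 1 / bk τ r n 0
  | m + 1 => -(1 / bk τ r (n - (m + 1)) 0) *
      ∑ i ∈ (Finset.range (m + 1)).attach,
        th τ r n i.1 * bk τ r (n - i.1) (m + 1 - i.1)
  decreasing_by exact Finset.mem_range.mp i.2

/-- Grid points `t_n := Σ_{k=1}^{n} τ_k` (so `t_0 = 0`). -/
noncomputable def tg (τ : ℕ → ℝ) (n : ℕ) : ℝ := ∑ k ∈ Finset.Icc 1 n, τ k

/-- Local BDF2 consistency error `ξ^j := D_2Φ(t_j) − Φ'(t_j)`. -/
noncomputable def xi (τ r : ℕ → ℝ) (Φ : ℝ → ℝ) (j : ℕ) : ℝ :=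
  (∑ m ∈ Finset.Icc 1 j, bk τ r j (j - m) * (Φ (tg τ m) - Φ (tg τ (m - 1))))
    - deriv Φ (tg τ j)

lemma bk_two (τ r : ℕ → ℝ) (n j : ℕ) (hj : 2 ≤ j) : bk τ r n j = 0 := by
  unfold bk; rw [if_neg (by omega), if_neg (by omega)]

lemma th_zero (τ r : ℕ → ℝ) (n : ℕ) : th τ r n 0 = 1 / bk τ r n 0 := by rw [th]

lemma th_succ (τ r : ℕ → ℝ) (n m : ℕ) :
    th τ r n (m + 1) = (1 / bk τ r (n - (m + 1)) 0) *
      (th τ r n m * (-(bk τ r (n - m) 1))) := by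
  rw [th]
  rw [Finset.sum_attach (Finset.range (m + 1))
    (fun i => th τ r n i * bk τ r (n - i) (m + 1 - i))]
  rw [Finset.sum_eq_single_of_mem m (by simp)]
  · have h1 : m + 1 - m = 1 := by omega
    rw [h1]; ring
  · intro i hi hne
    have h2 : 2 ≤ m + 1 - i := by
      have := Finset.mem_range.mp hi; omega
    rw [bk_two τ r _ _ h2, mul_zero]

lemma bk0_pos {N : ℕ} {τ r : ℕ → ℝ} (hτ : ∀ k, 1 ≤ k → k ≤ N → 0 < τ k)
    (hrnn : ∀ k, 1 ≤ k → k ≤ N → 0 ≤ r k) {j : ℕ} (h1 : 1 ≤ j) (hN : j ≤ N) :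
    0 < bk τ r j 0 := by
  have h := hτ j h1 hN; have h' := hrnn j h1 hN
  unfold bk; rw [if_pos rfl]; apply div_pos <;> nlinarith

lemma bk1_nonpos {N : ℕ} {τ r : ℕ → ℝ} (hτ : ∀ k, 1 ≤ k → k ≤ N → 0 < τ k)
    (hrnn : ∀ k, 1 ≤ k → k ≤ N → 0 ≤ r k) {j : ℕ} (h1 : 1 ≤ j) (hN : j ≤ N) :
    bk τ r j 1 ≤ 0 := by
  have h := hτ j h1 hN; have h' := hrnn j h1 hN
  unfold bk; rw [if_neg (by omega), if_pos rfl]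
  apply div_nonpos_of_nonpos_of_nonneg
  · nlinarith [sq_nonneg (r j)]
  · nlinarith

lemma th_nonneg {N : ℕ} {τ r : ℕ → ℝ} (hτ : ∀ k, 1 ≤ k → k ≤ N → 0 < τ k)
    (hrnn : ∀ k, 1 ≤ k → k ≤ N → 0 ≤ r k) {k : ℕ} (hkN : k ≤ N) :
    ∀ m, m < k → 0 ≤ th τ r k m := by
  intro m
  induction m with
  | zero =>
    intro hm
    rw [th_zero]
    exact le_of_lt (one_div_pos.mpr (bk0_pos hτ hrnn (by omega) hkN))
  | succ m ih =>
    intro hm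
    rw [th_succ]
    have h1 : 0 < bk τ r (k - (m + 1)) 0 := bk0_pos hτ hrnn (by omega) (by omega)
    have h2 : bk τ r (k - m) 1 ≤ 0 := bk1_nonpos hτ hrnn (by omega) (by omega)
    have h3 := ih (by omega)
    have : (0:ℝ) ≤ 1 / bk τ r (k - (m+1)) 0 := le_of_lt (one_div_pos.mpr h1)
    exact mul_nonneg this (mul_nonneg h3 (by linarith))

lemma tg_zero (τ : ℕ → ℝ) : tg τ 0 = 0 := by simp [tg]

lemma tg_succ (τ : ℕ → ℝ) (m : ℕ) : tg τ (m + 1) = tg τ m + τ (m + 1) := by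
  unfold tg
  exact Finset.sum_Icc_succ_top (by omega) τ

lemma key_deriv_bound {h p : ℝ → ℝ} (hp : Continuous p) (hh : ∀ x, HasDerivAt h (p x) x)
    {a c s : ℝ} (ha : a ≤ s) (hs : s ≤ c) :
    |h s - h c| ≤ ∫ u in a..c, |p u| := by
  have e : ∫ u in s..c, p u = h c - h s :=
    intervalIntegral.integral_eq_sub_of_hasDerivAt (fun x _ => hh x)
      (hp.intervalIntegrable s c)
  rw [abs_sub_comm, ← e]
  calc |∫ u in s..c, p u| ≤ ∫ u in s..c, |p u| :=
        intervalIntegral.abs_integral_le_integral_abs hs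
    _ ≤ ∫ u in a..c, |p u| := by
        rw [← intervalIntegral.integral_add_adjacent_intervals
          (hp.abs.intervalIntegrable a s) (hp.abs.intervalIntegrable s c)]
        have h0 : 0 ≤ ∫ u in a..s, |p u| :=
          intervalIntegral.integral_nonneg ha (fun u _ => abs_nonneg _)
        linarith

lemma taylor1_bound {g h : ℝ → ℝ} (hg : ∀ x, HasDerivAt g (h x) x) (hhc : Continuous h)
    {t b y C : ℝ} (htb : t ≤ b) (hC : ∀ s ∈ Set.Icc t b, |h s - y| ≤ C) :
    |g t - g b - y * (t - b)| ≤ C * (b - t) := by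
  have hint : IntervalIntegrable h MeasureTheory.volume t b := hhc.intervalIntegrable t b
  have e1 : ∫ s in t..b, h s = g b - g t :=
    intervalIntegral.integral_eq_sub_of_hasDerivAt (fun x _ => hg x) hint
  have e : g t - g b - y * (t - b) = ∫ s in t..b, (y - h s) := by
    rw [intervalIntegral.integral_sub intervalIntegrable_const hint, e1,
      intervalIntegral.integral_const]
    simp; ring
  rw [e]
  have hb := intervalIntegral.norm_integral_le_of_norm_le_const (a := t) (b := b)
    (C := C) (f := fun s => y - h s) ?_
  · rwa [Real.norm_eq_abs, abs_of_nonneg (by linarith : (0:ℝ) ≤ b - t)] at hb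
  · intro x hx
    rw [Set.uIoc_of_le htb] at hx
    have hx' : x ∈ Set.Icc t b := ⟨le_of_lt hx.1, hx.2⟩
    rw [Real.norm_eq_abs, abs_sub_comm]; exact hC x hx'

lemma integral_abs_le {f : ℝ → ℝ} (hf : Continuous f) {a b A B : ℝ} (hab : a ≤ b)
    (hbd : ∀ t ∈ Set.Icc a b, |f t| ≤ A + B * (b - t)) :
    |∫ t in a..b, f t| ≤ A * (b - a) + B * ((b - a)^2/2) := by
  have h1 : |∫ t in a..b, f t| ≤ ∫ t in a..b, |f t| :=
    intervalIntegral.abs_integral_le_integral_abs hab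
  have h2 : (∫ t in a..b, |f t|) ≤ ∫ t in a..b, (A + B * (b - t)) := by
    apply intervalIntegral.integral_mono_on hab (hf.abs.intervalIntegrable a b)
    · exact ((continuous_const.add (continuous_const.mul
        (continuous_const.sub continuous_id))).intervalIntegrable a b)
    · exact hbd
  have h3 : (∫ t in a..b, (A + B * (b - t))) = A * (b - a) + B * ((b - a)^2/2) := by
    rw [intervalIntegral.integral_add intervalIntegrable_const]
    · rw [intervalIntegral.integral_const_mul]
      have h4 : (∫ x in a..b, (b - x)) = b * (b - a) - (b ^ 2 - a ^ 2) / 2 := by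
        rw [intervalIntegral.integral_sub intervalIntegrable_const
          ((continuous_id'.intervalIntegrable a b :
            IntervalIntegrable (fun x : ℝ => x) MeasureTheory.volume a b)),
          intervalIntegral.integral_const, integral_id]
        simp; ring
      rw [h4, intervalIntegral.integral_const]
      simp; ring
    · exact (continuous_const.mul (continuous_const.sub continuous_id)).intervalIntegrable a b
  linarith

lemma sum_shift (k : ℕ) (f : ℕ → ℝ) :
    ∑ j ∈ Finset.Icc 2 k, f j = ∑ j ∈ Finset.Icc 1 (k - 1), f (j + 1) := by
  apply Finset.sum_bij' (fun a _ => a - 1) (fun a _ => a + 1) <;>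
    simp only [Finset.mem_Icc] <;> intros <;>
    first
      | omega
      | (congr 1; omega)


set_option maxHeartbeats 1000000 in
lemma xi_step {Φ g h2 p : ℝ → ℝ}
    (hgd : ∀ x, HasDerivAt Φ (g x) x) (hgc : Continuous g)
    (hh2 : ∀ x, HasDerivAt g (h2 x) x) (hh2c : Continuous h2)
    (hp3 : ∀ x, HasDerivAt h2 (p x) x) (hpc : Continuous p)
    {A B C τ0 τ1 rj b0 b1 : ℝ}
    (hτ0 : 0 < τ0) (hτ1 : 0 < τ1) (hrj : rj = τ0 / τ1)
    (hB : B = A + τ1) (hC : C = B + τ0)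
    (hb0 : b0 = (1 + 2 * rj) / (τ0 * (1 + rj)))
    (hb1 : b1 = -rj ^ 2 / (τ0 * (1 + rj))) :
    |b0 * (Φ C - Φ B) + b1 * (Φ B - Φ A) - g C|
      ≤ 2 * τ0 * (∫ t in B..C, |p t|) + (-b1) * (τ1 ^ 2 / 2) * (∫ t in A..B, |p t|) := by
  have hftc : ∀ x y : ℝ, (∫ t in x..y, g t) = Φ y - Φ x := fun x y =>
    intervalIntegral.integral_eq_sub_of_hasDerivAt (fun t _ => hgd t)
      (hgc.intervalIntegrable x y)
  have hrjnn : 0 ≤ rj := by rw [hrj]; positivity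
  have h1r : (0:ℝ) < 1 + rj := by linarith
  have hbk0 : 0 < b0 := by rw [hb0]; positivity
  have hbk1 : b1 ≤ 0 := by
    rw [hb1]
    apply div_nonpos_of_nonpos_of_nonneg
    · nlinarith [sq_nonneg rj]
    · positivity
  have hAB : A ≤ B := by rw [hB]; linarith
  have hBC : B ≤ C := by rw [hC]; linarith
  have hPnn : 0 ≤ ∫ t in B..C, |p t| :=
    intervalIntegral.integral_nonneg hBC (fun u _ => abs_nonneg _)
  have hPpnn : 0 ≤ ∫ t in A..B, |p t| :=
    intervalIntegral.integral_nonneg hAB (fun u _ => abs_nonneg _)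
  have hsplitP : (∫ t in A..C, |p t|) = (∫ t in A..B, |p t|) + ∫ t in B..C, |p t| :=
    (intervalIntegral.integral_add_adjacent_intervals
      (hpc.abs.intervalIntegrable A B) (hpc.abs.intervalIntegrable B C)).symm
  -- pointwise bounds on ρ t = g t - g C - h2 C * (t - C)
  have bound1 : ∀ t ∈ Set.Icc B C, |g t - g C - h2 C * (t - C)|
      ≤ (∫ t in B..C, |p t|) * (C - t) := by
    intro t ht
    exact taylor1_bound hh2 hh2c ht.2
      (fun s hs => key_deriv_bound hpc hp3 (le_trans ht.1 hs.1) hs.2)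
  have bound2 : ∀ t ∈ Set.Icc A B, |g t - g C - h2 C * (t - C)|
      ≤ (∫ t in B..C, |p t|) * τ0
        + ((∫ t in A..B, |p t|) + ∫ t in B..C, |p t|) * (B - t) := by
    intro t ht
    have hρB : |g B - g C - h2 C * (B - C)| ≤ (∫ t in B..C, |p t|) * (C - B) :=
      bound1 B ⟨le_rfl, hBC⟩
    have htri : |g t - g C - h2 C * (t - C)|
        ≤ |g t - g B - h2 C * (t - B)| + |g B - g C - h2 C * (B - C)| := by
      have e : g t - g C - h2 C * (t - C)
          = (g t - g B - h2 C * (t - B)) + (g B - g C - h2 C * (B - C)) := by ring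
      rw [e]; exact abs_add_le _ _
    have hmid : |g t - g B - h2 C * (t - B)|
        ≤ ((∫ t in A..B, |p t|) + ∫ t in B..C, |p t|) * (B - t) := by
      apply taylor1_bound hh2 hh2c ht.2
      intro s hs
      rw [← hsplitP]
      exact key_deriv_bound hpc hp3 (le_trans ht.1 hs.1) (le_trans hs.2 hBC)
    have hCB' : C - B = τ0 := by rw [hC]; ring
    rw [hCB'] at hρB
    linarith
  have hρcont : Continuous (fun t => g t - g C - h2 C * (t - C)) :=
    (hgc.sub continuous_const).sub
      (continuous_const.mul (continuous_id'.sub continuous_const))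
  have I1 : |∫ t in B..C, (g t - g C - h2 C * (t - C))|
      ≤ 0 * (C - B) + (∫ t in B..C, |p t|) * ((C - B) ^ 2 / 2) := by
    apply integral_abs_le hρcont hBC
    intro t ht
    have := bound1 t ht
    linarith
  have I2 : |∫ t in A..B, (g t - g C - h2 C * (t - C))|
      ≤ ((∫ t in B..C, |p t|) * τ0) * (B - A)
        + ((∫ t in A..B, |p t|) + ∫ t in B..C, |p t|) * ((B - A) ^ 2 / 2) := by
    apply integral_abs_le hρcont hAB
    intro t ht
    have := bound2 t ht
    linarith
  -- exactness identities
  have hCB : C - B = τ0 := by rw [hC]; ring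
  have hBA : B - A = τ1 := by rw [hB]; ring
  have hDne : τ0 * (1 + rj) ≠ 0 := by positivity
  have hD : (0:ℝ) < τ0 * (1 + rj) := by positivity
  have hrmul : rj * τ1 = τ0 := by
    rw [hrj]
    exact div_mul_cancel₀ τ0 (ne_of_gt hτ1)
  have ident1 : b0 * (C - B) + b1 * (B - A) = 1 := by
    rw [hCB, hBA, hb0, hb1, div_mul_eq_mul_div, div_mul_eq_mul_div, ← add_div,
      div_eq_one_iff_eq hDne]
    linear_combination (-rj) * hrmul
  have ident2 : b0 * ((C ^ 2 - B ^ 2) / 2 - C * (C - B))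
      + b1 * ((B ^ 2 - A ^ 2) / 2 - C * (B - A)) = 0 := by
    have h4 : (C ^ 2 - B ^ 2) / 2 - C * (C - B) = -τ0 ^ 2 / 2 := by
      rw [← hCB]; ring
    have h5 : (B ^ 2 - A ^ 2) / 2 - C * (B - A) = -τ1 * (τ0 + τ1 / 2) := by
      rw [← hCB, ← hBA]; ring
    rw [h4, h5, hb0, hb1, div_mul_eq_mul_div, div_mul_eq_mul_div, ← add_div,
      div_eq_zero_iff]
    left
    linear_combination (rj * τ0 + (rj * τ1 + τ0) / 2) * hrmul
  -- integral decomposition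
  have igid : ∀ x y : ℝ, (∫ t in x..y, g t)
      = (∫ t in x..y, (g t - g C - h2 C * (t - C)))
        + ((y - x) * g C + h2 C * ((y ^ 2 - x ^ 2) / 2 - C * (y - x))) := by
    intro x y
    have i1 : IntervalIntegrable (fun t => g t - g C) MeasureTheory.volume x y :=
      (hgc.sub continuous_const).intervalIntegrable x y
    have i2 : IntervalIntegrable (fun t : ℝ => h2 C * (t - C)) MeasureTheory.volume x y :=
      (continuous_const.mul (continuous_id'.sub continuous_const)).intervalIntegrable x y
    have i4 : IntervalIntegrable (fun t : ℝ => t) MeasureTheory.volume x y :=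
      continuous_id'.intervalIntegrable x y
    have hs : (∫ t in x..y, (g t - g C - h2 C * (t - C)))
        = (∫ t in x..y, g t) - (y - x) * g C
          - h2 C * ((y ^ 2 - x ^ 2) / 2 - C * (y - x)) := by
      rw [intervalIntegral.integral_sub i1 i2,
        intervalIntegral.integral_sub (hgc.intervalIntegrable x y) intervalIntegrable_const,
        intervalIntegral.integral_const_mul,
        intervalIntegral.integral_sub i4 intervalIntegrable_const,
        integral_id, intervalIntegral.integral_const, intervalIntegral.integral_const]
      simp only [smul_eq_mul]
      ring
    linarith
  have hxi : b0 * (Φ C - Φ B) + b1 * (Φ B - Φ A) - g C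
      = b0 * (∫ t in B..C, (g t - g C - h2 C * (t - C)))
        + b1 * (∫ t in A..B, (g t - g C - h2 C * (t - C))) := by
    rw [← hftc B C, ← hftc A B, igid B C, igid A B]
    linear_combination g C * ident1 + h2 C * ident2
  -- coefficient bound
  have e1' : -b1 = rj ^ 2 / (τ0 * (1 + rj)) := by rw [hb1]; ring
  have haux1 : rj ^ 2 * (τ0 * τ1) = rj * τ0 ^ 2 := by
    linear_combination (rj * τ0) * hrmul
  have haux2 : rj ^ 2 * (τ1 ^ 2 / 2) = τ0 ^ 2 / 2 := by
    linear_combination ((rj * τ1 + τ0) / 2) * hrmul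
  have cbound : b0 * (τ0 ^ 2 / 2) + (-b1) * (τ0 * τ1 + τ1 ^ 2 / 2) ≤ 2 * τ0 := by
    rw [hb0, e1', div_mul_eq_mul_div, div_mul_eq_mul_div, ← add_div,
      div_le_iff₀ hD]
    have expand : (1 + 2 * rj) * (τ0 ^ 2 / 2) + rj ^ 2 * (τ0 * τ1 + τ1 ^ 2 / 2)
        = τ0 ^ 2 + 2 * (rj * τ0 ^ 2) := by
      linear_combination haux1 + haux2
    nlinarith [expand, sq_nonneg τ0, mul_nonneg hrjnn (sq_nonneg τ0)]
  -- final estimate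
  rw [hxi]
  have step1 : |b0 * (∫ t in B..C, (g t - g C - h2 C * (t - C)))
        + b1 * (∫ t in A..B, (g t - g C - h2 C * (t - C)))|
      ≤ b0 * |∫ t in B..C, (g t - g C - h2 C * (t - C))|
        + (-b1) * |∫ t in A..B, (g t - g C - h2 C * (t - C))| := by
    calc |b0 * (∫ t in B..C, (g t - g C - h2 C * (t - C)))
          + b1 * (∫ t in A..B, (g t - g C - h2 C * (t - C)))|
        ≤ |b0 * (∫ t in B..C, (g t - g C - h2 C * (t - C)))|
          + |b1 * (∫ t in A..B, (g t - g C - h2 C * (t - C)))| := abs_add_le _ _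
      _ = b0 * |∫ t in B..C, (g t - g C - h2 C * (t - C))|
          + (-b1) * |∫ t in A..B, (g t - g C - h2 C * (t - C))| := by
          rw [abs_mul, abs_mul, abs_of_pos hbk0, abs_of_nonpos hbk1]
  have step2 : b0 * |∫ t in B..C, (g t - g C - h2 C * (t - C))|
        + (-b1) * |∫ t in A..B, (g t - g C - h2 C * (t - C))|
      ≤ b0 * (0 * (C - B) + (∫ t in B..C, |p t|) * ((C - B) ^ 2 / 2))
        + (-b1) * (((∫ t in B..C, |p t|) * τ0) * (B - A)
            + ((∫ t in A..B, |p t|) + ∫ t in B..C, |p t|) * ((B - A) ^ 2 / 2)) :=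
    add_le_add (mul_le_mul_of_nonneg_left I1 hbk0.le)
      (mul_le_mul_of_nonneg_left I2 (by linarith))
  have step3 : b0 * (0 * (C - B) + (∫ t in B..C, |p t|) * ((C - B) ^ 2 / 2))
        + (-b1) * (((∫ t in B..C, |p t|) * τ0) * (B - A)
            + ((∫ t in A..B, |p t|) + ∫ t in B..C, |p t|) * ((B - A) ^ 2 / 2))
      ≤ 2 * τ0 * (∫ t in B..C, |p t|) + (-b1) * (τ1 ^ 2 / 2) * (∫ t in A..B, |p t|) := by
    rw [hCB, hBA]
    nlinarith [mul_le_mul_of_nonneg_right cbound hPnn]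
  linarith

set_option maxHeartbeats 1000000 in
theorem stmt12 (N : ℕ) (τ r : ℕ → ℝ)
    (hτ : ∀ k, 1 ≤ k → k ≤ N → 0 < τ k)
    (hr1 : r 1 = 0)
    (hr : ∀ k, 2 ≤ k → k ≤ N → r k = τ k / τ (k - 1))
    (hratio : ∀ i, 2 ≤ i → i ≤ N → 0 < r i ∧ r i < (3 + Real.sqrt 17) / 2)
    (Φ : ℝ → ℝ) (hΦ : ContDiff ℝ 3 Φ)
    (k : ℕ) (hk1 : 1 ≤ k) (hkN : k ≤ N) :
    |∑ j ∈ Finset.Icc 1 k, th τ r k (k - j) * xi τ r Φ j| ≤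
      th τ r k (k - 1) * (∫ t in (0:ℝ)..(tg τ 1), |iteratedDeriv 2 Φ t|)
        + 3 * ∑ j ∈ Finset.Icc 1 k,
            th τ r k (k - j) * τ j *
              ∫ t in (tg τ (j - 1))..(tg τ j), |iteratedDeriv 3 Φ t| := by
  -- notation
  set g := deriv Φ with hgdef
  set h2 := iteratedDeriv 2 Φ with h2def
  set p := iteratedDeriv 3 Φ with hpdef
  -- smoothness facts
  have hΦd : Differentiable ℝ Φ := hΦ.differentiable (by norm_num)
  have hgd : ∀ x, HasDerivAt Φ (g x) x := fun x => (hΦd x).hasDerivAt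
  have hgc : Continuous g := by
    rw [hgdef, ← iteratedDeriv_one]
    exact hΦ.continuous_iteratedDeriv 1 (by norm_num)
  have hh2c : Continuous h2 := hΦ.continuous_iteratedDeriv 2 (by norm_num)
  have hpc : Continuous p := hΦ.continuous_iteratedDeriv 3 (by norm_num)
  have hgdiff : Differentiable ℝ g := by
    rw [hgdef, ← iteratedDeriv_one]
    exact hΦ.differentiable_iteratedDeriv 1 (by norm_num)
  have hd2 : Differentiable ℝ h2 := hΦ.differentiable_iteratedDeriv 2 (by norm_num)
  have e2 : h2 = deriv g := by
    rw [h2def, hgdef, show (2:ℕ) = 1 + 1 from rfl, iteratedDeriv_succ, iteratedDeriv_one]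
  have e3 : p = deriv h2 := by
    rw [hpdef, h2def, show (3:ℕ) = 2 + 1 from rfl, iteratedDeriv_succ]
  have hh2 : ∀ x, HasDerivAt g (h2 x) x := fun x => by
    rw [e2]; exact (hgdiff x).hasDerivAt
  have hp3 : ∀ x, HasDerivAt h2 (p x) x := fun x => by
    rw [e3]; exact (hd2 x).hasDerivAt
  have hftc : ∀ x y : ℝ, (∫ t in x..y, g t) = Φ y - Φ x := fun x y =>
    intervalIntegral.integral_eq_sub_of_hasDerivAt (fun t _ => hgd t)
      (hgc.intervalIntegrable x y)
  -- ratio facts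
  have hrnn : ∀ i, 1 ≤ i → i ≤ N → 0 ≤ r i := by
    intro i h1 h2'
    rcases Nat.lt_or_ge i 2 with h | h
    · have : i = 1 := by omega
      rw [this, hr1]
    · exact (hratio i h h2').1.le
  -- grid facts
  have htg : ∀ j, 1 ≤ j → tg τ j = tg τ (j - 1) + τ j := by
    intro j hj
    have := tg_succ τ (j - 1)
    rwa [show j - 1 + 1 = j by omega] at this
  have htgle : ∀ j, 1 ≤ j → j ≤ N → tg τ (j - 1) ≤ tg τ j := by
    intro j h1 h2'
    rw [htg j h1]
    have := hτ j h1 h2'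
    linarith
  -- bound for xi 1
  have hτ1 : 0 < τ 1 := hτ 1 le_rfl (by omega)
  have htg1 : tg τ 1 = τ 1 := by
    rw [htg 1 le_rfl, show (1:ℕ) - 1 = 0 from rfl, tg_zero]; ring
  have key1 : |xi τ r Φ 1| ≤ ∫ t in (0:ℝ)..(tg τ 1), |h2 t| := by
    set Q := ∫ t in (0:ℝ)..(tg τ 1), |h2 t| with hQdef
    have ht1nn : (0:ℝ) ≤ tg τ 1 := by rw [htg1]; linarith
    have hC : ∀ s ∈ Set.Icc (0:ℝ) (tg τ 1), |g s - g (tg τ 1)| ≤ Q :=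
      fun s hs => key_deriv_bound hh2c hh2 hs.1 hs.2
    have hT := taylor1_bound hgd hgc ht1nn hC
    -- hT : |Φ 0 - Φ (tg τ 1) - g (tg τ 1) * (0 - tg τ 1)| ≤ Q * (tg τ 1 - 0)
    have hb1 : bk τ r 1 0 = 1 / τ 1 := by
      simp [bk, hr1]
    have hxi1 : xi τ r Φ 1 = (1 / τ 1) * (Φ (tg τ 1) - Φ (tg τ 0)) - g (tg τ 1) := by
      unfold xi
      rw [Finset.Icc_self, Finset.sum_singleton]
      rw [show (1:ℕ) - 1 = 0 from rfl, hb1, hgdef]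
    rw [hxi1, tg_zero]
    have e : (1 / τ 1) * (Φ (tg τ 1) - Φ 0) - g (tg τ 1)
        = -(1 / τ 1) * (Φ 0 - Φ (tg τ 1) - g (tg τ 1) * (0 - tg τ 1)) := by
      field_simp
      rw [htg1]; ring
    rw [e, abs_mul, abs_neg, abs_of_nonneg (by positivity : (0:ℝ) ≤ 1 / τ 1)]
    rw [htg1] at hT ⊢
    calc 1 / τ 1 * |Φ 0 - Φ (τ 1) - g (τ 1) * (0 - τ 1)| ≤ 1 / τ 1 * (Q * (τ 1 - 0)) := by
          apply mul_le_mul_of_nonneg_left _ (by positivity)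
          convert hT using 3 <;> rw [htg1]
      _ = Q := by field_simp; ring
  -- per-j bound for 2 ≤ j
  have key : ∀ j, 2 ≤ j → j ≤ N →
      |xi τ r Φ j| ≤ 2 * τ j * (∫ t in (tg τ (j-1))..(tg τ j), |p t|)
        + ((r j) ^ 2 / (τ j * (1 + r j))) * ((τ (j-1)) ^ 2 / 2) *
            (∫ t in (tg τ (j-2))..(tg τ (j-1)), |p t|) := by
    intro j hj2 hjN
    obtain ⟨j', rfl⟩ : ∃ j', j = j' + 2 := ⟨j - 2, by omega⟩
    have e0 : bk τ r (j' + 2) 0 = (1 + 2 * r (j' + 2)) / (τ (j' + 2) * (1 + r (j' + 2))) := by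
      simp [bk]
    have e1 : bk τ r (j' + 2) 1 = -(r (j' + 2)) ^ 2 / (τ (j' + 2) * (1 + r (j' + 2))) := by
      simp [bk]
    have hrj : r (j' + 2) = τ (j' + 2) / τ (j' + 1) := by
      have := hr (j' + 2) (by omega) hjN
      rwa [show j' + 2 - 1 = j' + 1 from rfl] at this
    have hτj : 0 < τ (j' + 2) := hτ _ (by omega) hjN
    have hτj1 : 0 < τ (j' + 1) := hτ _ (by omega) (by omega)
    have hB : tg τ (j' + 1) = tg τ j' + τ (j' + 1) := tg_succ τ j'
    have hC : tg τ (j' + 2) = tg τ (j' + 1) + τ (j' + 2) := tg_succ τ (j' + 1)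
    -- reduction of the sum defining xi
    have hsum : (∑ m ∈ Finset.Icc 1 (j' + 2),
          bk τ r (j' + 2) (j' + 2 - m) * (Φ (tg τ m) - Φ (tg τ (m - 1))))
        = bk τ r (j' + 2) 1 * (Φ (tg τ (j' + 1)) - Φ (tg τ j'))
          + bk τ r (j' + 2) 0 * (Φ (tg τ (j' + 2)) - Φ (tg τ (j' + 1))) := by
      rw [show j' + 2 = j' + 1 + 1 from rfl, Finset.sum_Icc_succ_top (by omega),
        Finset.sum_Icc_succ_top (by omega)]
      have hz : (∑ m ∈ Finset.Icc 1 j',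
          bk τ r (j' + 1 + 1) (j' + 1 + 1 - m) * (Φ (tg τ m) - Φ (tg τ (m - 1)))) = 0 := by
        apply Finset.sum_eq_zero
        intro m hm
        have hm' := Finset.mem_Icc.mp hm
        rw [bk_two τ r _ _ (by omega), zero_mul]
      rw [hz, show j' + 1 + 1 - (j' + 1 + 1) = 0 from by omega,
        show j' + 1 + 1 - (j' + 1) = 1 from by omega,
        show j' + 1 + 1 - 1 = j' + 1 from rfl,
        show j' + 1 - 1 = j' from rfl]
      ring
    have hxi0 : xi τ r Φ (j' + 2)
        = bk τ r (j' + 2) 0 * (Φ (tg τ (j' + 2)) - Φ (tg τ (j' + 1)))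
          + bk τ r (j' + 2) 1 * (Φ (tg τ (j' + 1)) - Φ (tg τ j')) - g (tg τ (j' + 2)) := by
      unfold xi
      rw [hsum, ← hgdef]
      ring
    rw [show j' + 2 - 1 = j' + 1 from rfl, show j' + 2 - 2 = j' from rfl, hxi0, e0, e1]
    have happ := xi_step hgd hgc hh2 hh2c hp3 hpc hτj hτj1 hrj hB hC rfl rfl
    have e2' : -(-(r (j' + 2)) ^ 2 / (τ (j' + 2) * (1 + r (j' + 2))))
        = (r (j' + 2)) ^ 2 / (τ (j' + 2) * (1 + r (j' + 2))) := by ring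
    rw [e2'] at happ
    exact happ
  -- kernel coefficient facts for transfer
  have ebk1 : ∀ n : ℕ, -(bk τ r n 1) = (r n) ^ 2 / (τ n * (1 + r n)) := by
    intro n; simp [bk]; ring
  have eb0 : ∀ n : ℕ, bk τ r n 0 = (1 + 2 * r n) / (τ n * (1 + r n)) := by
    intro n; simp [bk]
  -- transfer inequality
  have trans : ∀ j, 1 ≤ j → j + 1 ≤ k →
      th τ r k (k - j - 1) * ((r (j+1)) ^ 2 / (τ (j+1) * (1 + r (j+1))) * ((τ j) ^ 2 / 2))
        ≤ th τ r k (k - j) * τ j := by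
    intro j h1 h2'
    have hjN' : j ≤ N := by omega
    have hτj : 0 < τ j := hτ j h1 hjN'
    have hrj : 0 ≤ r j := hrnn j h1 hjN'
    have hb0pos : 0 < bk τ r j 0 := bk0_pos hτ hrnn h1 hjN'
    have hb0τ : bk τ r j 0 * τ j ≤ 2 := by
      rw [eb0 j, div_mul_eq_mul_div, div_le_iff₀ (by positivity)]
      nlinarith [mul_nonneg hrj hτj.le]
    have hth : th τ r k (k - j) = (1 / bk τ r j 0) *
        (th τ r k (k - j - 1) * (-(bk τ r (j+1) 1))) := by
      have h := th_succ τ r k (k - j - 1)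
      rwa [show k - j - 1 + 1 = k - j from by omega, show k - (k - j) = j from by omega,
        show k - (k - j - 1) = j + 1 from by omega] at h
    have hthnn : 0 ≤ th τ r k (k - j - 1) := th_nonneg hτ hrnn hkN _ (by omega)
    have hτj1 : 0 < τ (j+1) := hτ (j+1) (by omega) (by omega)
    have hrj1 : 0 ≤ r (j+1) := hrnn (j+1) (by omega) (by omega)
    have hFnn : 0 ≤ (r (j+1)) ^ 2 / (τ (j+1) * (1 + r (j+1))) := by positivity
    have hXnn : 0 ≤ th τ r k (k - j - 1) * ((r (j+1)) ^ 2 / (τ (j+1) * (1 + r (j+1)))) :=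
      mul_nonneg hthnn hFnn
    have hco : (τ j) ^ 2 / 2 ≤ 1 / bk τ r j 0 * τ j := by
      have e : (1:ℝ) / bk τ r j 0 * τ j = τ j / bk τ r j 0 := by ring
      rw [e, le_div_iff₀ hb0pos]
      nlinarith [hb0τ, hτj]
    calc th τ r k (k - j - 1) * ((r (j+1)) ^ 2 / (τ (j+1) * (1 + r (j+1))) * ((τ j) ^ 2 / 2))
        = (th τ r k (k - j - 1) * ((r (j+1)) ^ 2 / (τ (j+1) * (1 + r (j+1))))) *
            ((τ j) ^ 2 / 2) := by ring
      _ ≤ (th τ r k (k - j - 1) * ((r (j+1)) ^ 2 / (τ (j+1) * (1 + r (j+1))))) *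
            (1 / bk τ r j 0 * τ j) := mul_le_mul_of_nonneg_left hco hXnn
      _ = (1 / bk τ r j 0) * (th τ r k (k - j - 1) *
            ((r (j+1)) ^ 2 / (τ (j+1) * (1 + r (j+1))))) * τ j := by ring
      _ = th τ r k (k - j) * τ j := by rw [hth, ebk1 (j+1)]
  -- nonnegativity facts
  have hTnn : ∀ j, 1 ≤ j → 0 ≤ th τ r k (k - j) := by
    intro j hj
    exact th_nonneg hτ hrnn hkN _ (by omega)
  have hPnn : ∀ j, 1 ≤ j → j ≤ N → 0 ≤ ∫ t in (tg τ (j-1))..(tg τ j), |p t| := by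
    intro j h1 h2'
    exact intervalIntegral.integral_nonneg (htgle j h1 h2') (fun u _ => abs_nonneg _)
  have hunn : ∀ j ∈ Finset.Icc 1 k, 0 ≤ th τ r k (k - j) * τ j *
      (∫ t in (tg τ (j-1))..(tg τ j), |p t|) := by
    intro j hj
    have hj' := Finset.mem_Icc.mp hj
    exact mul_nonneg (mul_nonneg (hTnn j hj'.1) (hτ j hj'.1 (by omega)).le)
      (hPnn j hj'.1 (by omega))
  -- triangle inequality
  have tri : |∑ j ∈ Finset.Icc 1 k, th τ r k (k - j) * xi τ r Φ j|
      ≤ ∑ j ∈ Finset.Icc 1 k, th τ r k (k - j) * |xi τ r Φ j| := by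
    calc |∑ j ∈ Finset.Icc 1 k, th τ r k (k - j) * xi τ r Φ j|
        ≤ ∑ j ∈ Finset.Icc 1 k, |th τ r k (k - j) * xi τ r Φ j| :=
          Finset.abs_sum_le_sum_abs _ _
      _ = ∑ j ∈ Finset.Icc 1 k, th τ r k (k - j) * |xi τ r Φ j| :=
          Finset.sum_congr rfl (fun j hj => by
            rw [abs_mul, abs_of_nonneg (hTnn j (Finset.mem_Icc.mp hj).1)])
  -- split off j = 1
  have hsplit1 : Finset.Icc 1 k = insert 1 (Finset.Icc 2 k) := by
    ext m; simp only [Finset.mem_Icc, Finset.mem_insert]; omega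
  have h1notin : (1:ℕ) ∉ Finset.Icc 2 k := by simp
  have hsum1 : ∑ j ∈ Finset.Icc 1 k, th τ r k (k - j) * |xi τ r Φ j|
      = th τ r k (k - 1) * |xi τ r Φ 1|
        + ∑ j ∈ Finset.Icc 2 k, th τ r k (k - j) * |xi τ r Φ j| := by
    rw [hsplit1, Finset.sum_insert h1notin]
  -- bound the tail sum
  have main2 : ∑ j ∈ Finset.Icc 2 k, th τ r k (k - j) * |xi τ r Φ j|
      ≤ (∑ j ∈ Finset.Icc 2 k, 2 * (th τ r k (k - j) * τ j *
            (∫ t in (tg τ (j-1))..(tg τ j), |p t|)))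
        + ∑ j ∈ Finset.Icc 2 k, th τ r k (k - j) *
            ((r j) ^ 2 / (τ j * (1 + r j)) * ((τ (j-1)) ^ 2 / 2) *
              (∫ t in (tg τ (j-2))..(tg τ (j-1)), |p t|)) := by
    rw [← Finset.sum_add_distrib]
    apply Finset.sum_le_sum
    intro j hj
    have hj' := Finset.mem_Icc.mp hj
    have hkey := key j hj'.1 (by omega)
    have hT := hTnn j (by omega)
    calc th τ r k (k - j) * |xi τ r Φ j|
        ≤ th τ r k (k - j) * (2 * τ j * (∫ t in (tg τ (j-1))..(tg τ j), |p t|)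
            + ((r j) ^ 2 / (τ j * (1 + r j))) * ((τ (j-1)) ^ 2 / 2) *
              (∫ t in (tg τ (j-2))..(tg τ (j-1)), |p t|)) :=
          mul_le_mul_of_nonneg_left hkey hT
      _ = 2 * (th τ r k (k - j) * τ j * (∫ t in (tg τ (j-1))..(tg τ j), |p t|))
            + th τ r k (k - j) * ((r j) ^ 2 / (τ j * (1 + r j)) * ((τ (j-1)) ^ 2 / 2) *
              (∫ t in (tg τ (j-2))..(tg τ (j-1)), |p t|)) := by ring
  -- shift the carry sum
  have hshift : ∑ j ∈ Finset.Icc 2 k, th τ r k (k - j) *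
        ((r j) ^ 2 / (τ j * (1 + r j)) * ((τ (j-1)) ^ 2 / 2) *
          (∫ t in (tg τ (j-2))..(tg τ (j-1)), |p t|))
      = ∑ j ∈ Finset.Icc 1 (k-1), th τ r k (k - (j+1)) *
        ((r (j+1)) ^ 2 / (τ (j+1) * (1 + r (j+1))) * ((τ (j+1-1)) ^ 2 / 2) *
          (∫ t in (tg τ (j+1-2))..(tg τ (j+1-1)), |p t|)) :=
    sum_shift k _
  have hcarry : ∑ j ∈ Finset.Icc 1 (k-1), th τ r k (k - (j+1)) *
        ((r (j+1)) ^ 2 / (τ (j+1) * (1 + r (j+1))) * ((τ (j+1-1)) ^ 2 / 2) *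
          (∫ t in (tg τ (j+1-2))..(tg τ (j+1-1)), |p t|))
      ≤ ∑ j ∈ Finset.Icc 1 (k-1), th τ r k (k - j) * τ j *
          (∫ t in (tg τ (j-1))..(tg τ j), |p t|) := by
    apply Finset.sum_le_sum
    intro j hj
    have hj' := Finset.mem_Icc.mp hj
    rw [show j + 1 - 1 = j from rfl, show j + 1 - 2 = j - 1 from by omega,
      show k - (j+1) = k - j - 1 from by omega]
    have htr := trans j hj'.1 (by omega)
    have hPj := hPnn j hj'.1 (by omega)
    calc th τ r k (k - j - 1) *
          ((r (j+1)) ^ 2 / (τ (j+1) * (1 + r (j+1))) * ((τ j) ^ 2 / 2) *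
            (∫ t in (tg τ (j-1))..(tg τ j), |p t|))
        = (th τ r k (k - j - 1) *
            ((r (j+1)) ^ 2 / (τ (j+1) * (1 + r (j+1))) * ((τ j) ^ 2 / 2))) *
            (∫ t in (tg τ (j-1))..(tg τ j), |p t|) := by ring
      _ ≤ (th τ r k (k - j) * τ j) * (∫ t in (tg τ (j-1))..(tg τ j), |p t|) :=
          mul_le_mul_of_nonneg_right htr hPj
  -- subset sums
  have hsub1 : ∑ j ∈ Finset.Icc 2 k, th τ r k (k - j) * τ j *
        (∫ t in (tg τ (j-1))..(tg τ j), |p t|)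
      ≤ ∑ j ∈ Finset.Icc 1 k, th τ r k (k - j) * τ j *
        (∫ t in (tg τ (j-1))..(tg τ j), |p t|) := by
    apply Finset.sum_le_sum_of_subset_of_nonneg
    · intro m hm; simp only [Finset.mem_Icc] at *; omega
    · intro i hi _; exact hunn i hi
  have hsub2 : ∑ j ∈ Finset.Icc 1 (k-1), th τ r k (k - j) * τ j *
        (∫ t in (tg τ (j-1))..(tg τ j), |p t|)
      ≤ ∑ j ∈ Finset.Icc 1 k, th τ r k (k - j) * τ j *
        (∫ t in (tg τ (j-1))..(tg τ j), |p t|) := by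
    apply Finset.sum_le_sum_of_subset_of_nonneg
    · intro m hm; simp only [Finset.mem_Icc] at *; omega
    · intro i hi _; exact hunn i hi
  have hb1 : th τ r k (k - 1) * |xi τ r Φ 1|
      ≤ th τ r k (k - 1) * ∫ t in (0:ℝ)..(tg τ 1), |h2 t| :=
    mul_le_mul_of_nonneg_left key1 (hTnn 1 le_rfl)
  have hdistr : ∑ j ∈ Finset.Icc 2 k, 2 * (th τ r k (k - j) * τ j *
        (∫ t in (tg τ (j-1))..(tg τ j), |p t|))
      = 2 * ∑ j ∈ Finset.Icc 2 k, th τ r k (k - j) * τ j *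
        (∫ t in (tg τ (j-1))..(tg τ j), |p t|) := by
    rw [Finset.mul_sum]
  linarith [tri, hsum1, main2, hshift, hcarry, hsub1, hsub2, hb1, hdistr]
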